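/- Acyclicity Lemma (Peskine–Szpiro): let A be a Noetherian local ring and let 0 → M_n → M_{n-1} → ⋯ → M_0 be a complex of finitely generated A-modules whose homology modules all have finite length. If each module M_i has depth at least r, then H_i of the complex vanishes for n ≥ i ≥ n - r + 1. -/

import Mathlib

open CategoryTheory IsLocalRing

noncomputable section

/-- `M` has projective dimension at most `n` over `A`: it admits a projective resolution
which vanishes in degrees above `n`. -/
def ProjDimLE (A : Type) [CommRing A] (M : Type) [AddCommGroup M] [Module A M] (n : ℕ) : Prop :=
  ∃ P : ProjectiveResolution (ModuleCat.of A M), ∀ i > n, Limits.IsZero (P.complex.X i)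

/-- `M` has finite projective dimension over `A`. -/
def FiniteProjDim (A : Type) [CommRing A] (M : Type) [AddCommGroup M] [Module A M] : Prop :=
  ∃ n, ProjDimLE A M n

/-- The projective dimension of `M` over `A` (junk value `0` if it is not finite). -/
def projDim (A : Type) [CommRing A] (M : Type) [AddCommGroup M] [Module A M] : ℕ :=
  sInf {n | ProjDimLE A M n}

/-- The depth of a module `M` over a local ring `A`: the supremum of the lengths of
`M`-regular sequences of elements of the maximal ideal. -/
def moduleDepth (A : Type) [CommRing A] [IsLocalRing A]
    (M : Type) [AddCommGroup M] [Module A M] : ℕ :=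
  sSup {n | ∃ rs : List A, rs.length = n ∧ (∀ r ∈ rs, r ∈ maximalIdeal A) ∧
    RingTheory.Sequence.IsRegular M rs}

end

set_option linter.unusedSectionVars false
set_option maxHeartbeats 1000000

open RingTheory.Sequence IsLocalRing Submodule Pointwise

section Socle
variable {A : Type*} [CommRing A] [IsLocalRing A]
variable {M : Type*} [AddCommGroup M] [Module A M]

/-- A nonzero Noetherian+Artinian module over a local ring has a nonzero socle element. -/
theorem exists_socle [IsNoetherian A M] [IsArtinian A M] [Nontrivial M] :
    ∃ y : M, y ≠ 0 ∧ ∀ a ∈ maximalIdeal A, a • y = 0 := by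
  have key : ∀ k : ℕ, (maximalIdeal A ^ (k+1)) • (⊤ : Submodule A M)
      = maximalIdeal A • ((maximalIdeal A ^ k) • (⊤ : Submodule A M)) := by
    intro k; rw [pow_succ, mul_comm, mul_smul]
  have hbot : ∃ k : ℕ, (maximalIdeal A ^ k) • (⊤ : Submodule A M) = ⊥ := by
    obtain ⟨N, ⟨k, rfl⟩, hmin⟩ := IsArtinian.set_has_minimal
      (R := A) (M := M) {N | ∃ k : ℕ, (maximalIdeal A ^ k) • (⊤ : Submodule A M) = N}
      ⟨⊤, 0, by simp⟩
    have hle : (maximalIdeal A ^ (k+1)) • (⊤ : Submodule A M)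
        ≤ (maximalIdeal A ^ k) • (⊤ : Submodule A M) := by
      rw [key]
      exact Submodule.smul_le.2 fun a _ y hy => Submodule.smul_mem _ _ hy
    have heq : (maximalIdeal A ^ (k+1)) • (⊤ : Submodule A M)
        = (maximalIdeal A ^ k) • (⊤ : Submodule A M) := by
      by_contra hne
      exact hmin _ ⟨k+1, rfl⟩ (lt_of_le_of_ne hle hne)
    refine ⟨k, Submodule.eq_bot_of_le_smul_of_le_jacobson_bot (maximalIdeal A) _
      (IsNoetherian.noetherian _) ?_ (maximalIdeal_le_jacobson _)⟩
    conv_lhs => rw [← heq, key]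
  classical
  have h0 : ¬ ((maximalIdeal A ^ 0) • (⊤ : Submodule A M) = ⊥) := by
    rw [pow_zero, one_smul]
    intro h
    exact not_subsingleton M ((Submodule.subsingleton_iff A).mp
      (subsingleton_of_bot_eq_top h.symm))
  let k := Nat.find hbot
  have hk : (maximalIdeal A ^ k) • (⊤ : Submodule A M) = ⊥ := Nat.find_spec hbot
  have hkpos : k ≠ 0 := fun h => h0 (h ▸ hk)
  obtain ⟨j, hjk⟩ : ∃ j, k = j + 1 := ⟨k - 1, (Nat.succ_pred_eq_of_pos (Nat.pos_of_ne_zero hkpos)).symm⟩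
  have hj : (maximalIdeal A ^ j) • (⊤ : Submodule A M) ≠ ⊥ :=
    Nat.find_min hbot (by omega)
  rw [hjk] at hk
  obtain ⟨y, hy, hy0⟩ := Submodule.exists_mem_ne_zero_of_ne_bot hj
  refine ⟨y, hy0, fun a ha => ?_⟩
  have : a • y ∈ (maximalIdeal A ^ (j+1)) • (⊤ : Submodule A M) := by
    rw [key]; exact Submodule.smul_mem_smul ha hy
  rw [hk] at this
  simpa using this

end Socle

open Submodule

section AssFin
variable {A : Type*} [CommRing A]
variable {M : Type*} [AddCommGroup M] [Module A M]

theorem mem_colonBot_iff (x : M) (r : A) :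
    r ∈ (⊥ : Submodule A M).colon {x} ↔ r • x = 0 := by
  simp [Submodule.mem_colon_singleton]

theorem ass_subset_union [IsNoetherianRing A] (N : Submodule A M) :
    associatedPrimes A M ⊆ associatedPrimes A N ∪ associatedPrimes A (M ⧸ N) := by
  rintro p hp'
  obtain ⟨hp, x, rfl⟩ := isAssociatedPrime_iff.mp hp'
  by_cases h : ∀ r : A, r • x ∈ N → r • x = 0
  · right
    refine isAssociatedPrime_iff.mpr ⟨hp, N.mkQ x, ?_⟩
    ext r
    rw [mem_colonBot_iff, mem_colonBot_iff,
      ← map_smul, Submodule.mkQ_apply, Submodule.Quotient.mk_eq_zero]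
    exact ⟨fun hr => hr ▸ N.zero_mem, fun hr => h r hr⟩
  · left
    push_neg at h
    obtain ⟨r, hrN, hr0⟩ := h
    refine isAssociatedPrime_iff.mpr ⟨hp, ⟨r • x, hrN⟩, ?_⟩
    ext s
    rw [mem_colonBot_iff, mem_colonBot_iff]
    constructor
    · intro hs
      ext
      simp only [SetLike.mk_smul_mk, ZeroMemClass.coe_zero]
      rw [smul_comm, hs, smul_zero]
    · intro hs
      have : (s * r) • x = 0 := by
        have := congrArg (Subtype.val) hs
        simpa [mul_smul] using this
      rcases hp.mem_or_mem (show s * r ∈ (⊥ : Submodule A M).colon {x} from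
        (mem_colonBot_iff _ _).mpr this) with h1 | h2
      · exact (mem_colonBot_iff _ _).mp h1
      · exact absurd ((mem_colonBot_iff _ _).mp h2) hr0

theorem associatedPrimes_finite [IsNoetherianRing A] [Module.Finite A M] :
    (associatedPrimes A M).Finite := by
  have : IsNoetherian A M := isNoetherian_of_isNoetherianRing_of_finite A M
  suffices h : ∀ K : Submodule A M, (associatedPrimes A (M ⧸ K)).Finite by
    have := h ⊥
    rwa [LinearEquiv.AssociatedPrimes.eq (Submodule.quotEquivOfEqBot ⊥ rfl)] at this
  intro K
  induction K using IsNoetherian.induction with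
  | _ K IH =>
  by_cases htriv : Subsingleton (M ⧸ K)
  · rw [associatedPrimes.eq_empty_of_subsingleton]; exact Set.finite_empty
  have : Nontrivial (M ⧸ K) := not_subsingleton_iff_nontrivial.mp htriv
  obtain ⟨p, hp⟩ := associatedPrimes.nonempty A (M ⧸ K)
  obtain ⟨hprime, y, hy⟩ := isAssociatedPrime_iff.mp hp
  have hyne : y ≠ 0 := by
    rintro rfl
    apply hprime.ne_top
    rw [hy, eq_top_iff]; intro r _; rw [mem_colonBot_iff, smul_zero]
  -- the submodule J/K = span y
  set J : Submodule A M := (Submodule.span A {y}).comap K.mkQ with hJ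
  have hKJ : K ≤ J := fun m hm => by
    simp [hJ, Submodule.mem_comap, (Submodule.Quotient.mk_eq_zero K).mpr hm,
      Quotient.mk''_eq_mk]
  have hKJlt : K < J := by
    obtain ⟨x0, hx0⟩ := Submodule.mkQ_surjective K y
    refine lt_of_le_of_ne hKJ (fun h => hyne ?_)
    have hx0J : x0 ∈ J := by
      simp [hJ, Submodule.mem_comap, hx0, Submodule.mem_span_singleton_self]
    rw [← h] at hx0J
    rw [← hx0, Submodule.mkQ_apply, Submodule.Quotient.mk_eq_zero]
    exact hx0J
  have hmap : J.map K.mkQ = Submodule.span A {y} := by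
    rw [hJ, Submodule.map_comap_eq, Submodule.range_mkQ, top_inf_eq]
  -- span y is isomorphic to A ⧸ p
  set φ : A →ₗ[A] (M ⧸ K) := LinearMap.toSpanSingleton A (M ⧸ K) y with hφ
  have hker : LinearMap.ker φ = p := by
    ext r
    rw [LinearMap.mem_ker, hφ, LinearMap.toSpanSingleton_apply, hy,
      mem_colonBot_iff]
  have hAssSpan : associatedPrimes A (Submodule.span A {y} : Submodule A (M ⧸ K)) = {p} := by
    have e1 : (A ⧸ p) ≃ₗ[A] (Submodule.span A {y} : Submodule A (M ⧸ K)) := by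
      exact Submodule.quotEquivOfEq _ _ hker.symm ≪≫ₗ φ.quotKerEquivRange ≪≫ₗ
        LinearEquiv.ofEq _ _ (LinearMap.span_singleton_eq_range A (M ⧸ K) y).symm
    rw [← LinearEquiv.AssociatedPrimes.eq e1]
    have h2 := associatedPrimes.eq_singleton_of_isPrimary hprime.isPrimary
    rwa [hprime.radical] at h2
  have e2 : ((M ⧸ K) ⧸ (Submodule.span A {y} : Submodule A (M ⧸ K))) ≃ₗ[A] M ⧸ J :=
    Submodule.quotEquivOfEq _ _ hmap.symm ≪≫ₗ
      Submodule.quotientQuotientEquivQuotient K J hKJ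
  refine Set.Finite.subset (Set.Finite.union (hAssSpan ▸ Set.finite_singleton p)
    ((LinearEquiv.AssociatedPrimes.eq e2).symm ▸ IH J hKJlt)) ?_
  exact ass_subset_union _

end AssFin

open Submodule IsLocalRing

section Avoid
variable {A : Type*} [CommRing A] [IsLocalRing A] [IsNoetherianRing A]
variable {M : Type*} [AddCommGroup M] [Module A M]
variable {N : Type*} [AddCommGroup N] [Module A N]

/-- If a f.g. module has no socle, it has a regular element in the maximal ideal. -/
theorem exists_reg_of_no_socle [Module.Finite A M]
    (h : ∀ y : M, y ≠ 0 → ∃ a ∈ maximalIdeal A, a • y ≠ 0) :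
    ∃ x ∈ maximalIdeal A, IsSMulRegular M x := by
  classical
  by_cases hs : Subsingleton M
  · exact ⟨0, zero_mem _, fun a b _ => Subsingleton.elim a b⟩
  by_contra hcon
  push_neg at hcon
  have hsub : (maximalIdeal A : Set A) ⊆ ⋃ p ∈ associatedPrimes A M, (p : Set A) := by
    rw [biUnion_associatedPrimes_eq_compl_regular A M]
    intro a ha
    exact hcon a ha
  have hfin := associatedPrimes_finite (A := A) (M := M)
  set s : Finset (Ideal A) := hfin.toFinset with hsdef
  have hsub' : (maximalIdeal A : Set A) ⊆ ⋃ p ∈ s, ((p : Ideal A) : Set A) := by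
    intro a ha
    obtain ⟨p, hp, hap⟩ := Set.mem_iUnion₂.mp (hsub ha)
    exact Set.mem_iUnion₂.mpr ⟨p, hfin.mem_toFinset.mpr hp, hap⟩
  have hprime : ∀ p ∈ s, p ≠ ⊥ → p ≠ ⊥ → (p : Ideal A).IsPrime := by
    intro p hp _ _
    exact (hfin.mem_toFinset.mp hp).isPrime
  obtain ⟨p, hps, hle⟩ := (Ideal.subset_union_prime (⊥ : Ideal A) (⊥ : Ideal A) hprime).mp hsub'
  have hpAss : p ∈ associatedPrimes A M := hfin.mem_toFinset.mp hps
  have hpm : p = maximalIdeal A :=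
    ((maximalIdeal.isMaximal A).eq_of_le hpAss.isPrime.ne_top hle).symm
  obtain ⟨hpp, y, hy⟩ := isAssociatedPrime_iff.mp hpAss
  have hyne : y ≠ 0 := by
    rintro rfl
    apply hpp.ne_top
    rw [hy, eq_top_iff]; intro r _; rw [mem_colonBot_iff, smul_zero]
  obtain ⟨a, ham, hay⟩ := h y hyne
  have haann : a ∈ (⊥ : Submodule A M).colon {y} := by
    rw [← hy, hpm]; exact ham
  exact hay ((mem_colonBot_iff y a).mp haann)

theorem isSMulRegular_prod {x : A} (h1 : IsSMulRegular M x) (h2 : IsSMulRegular N x) :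
    IsSMulRegular (M × N) x := by
  intro a b hab
  have h1' := h1 (congrArg Prod.fst hab)
  have h2' := h2 (congrArg Prod.snd hab)
  exact Prod.ext h1' h2'

/-- Two f.g. modules with regular elements in the maximal ideal have a common one. -/
theorem avoid₂ [Module.Finite A M] [Module.Finite A N]
    (hM : ∃ x ∈ maximalIdeal A, IsSMulRegular M x)
    (hN : ∃ x ∈ maximalIdeal A, IsSMulRegular N x) :
    ∃ x ∈ maximalIdeal A, IsSMulRegular M x ∧ IsSMulRegular N x := by
  obtain ⟨xm, hxm, hregm⟩ := hM
  obtain ⟨xn, hxn, hregn⟩ := hN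
  have h : ∀ y : M × N, y ≠ 0 → ∃ a ∈ maximalIdeal A, a • y ≠ 0 := by
    rintro ⟨y1, y2⟩ hy
    by_cases h1 : y1 = 0
    · have h2 : y2 ≠ 0 := fun h2 => hy (by simp [h1, h2, Prod.ext_iff])
      refine ⟨xn, hxn, fun hc => h2 (hregn ?_)⟩
      simpa [Prod.ext_iff] using congrArg Prod.snd hc
    · refine ⟨xm, hxm, fun hc => h1 (hregm ?_)⟩
      simpa [Prod.ext_iff] using congrArg Prod.fst hc
  obtain ⟨x, hx, hreg⟩ := exists_reg_of_no_socle h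
  refine ⟨x, hx, fun a b hab => ?_, fun a b hab => ?_⟩
  · have := hreg (show x • ((a, 0) : M × N) = x • ((b, 0) : M × N) by
      simp [Prod.ext_iff, hab])
    simpa [Prod.ext_iff] using this
  · have := hreg (show x • ((0, a) : M × N) = x • ((0, b) : M × N) by
      simp [Prod.ext_iff, hab])
    simpa [Prod.ext_iff] using this

end Avoid

open RingTheory.Sequence IsLocalRing Submodule Pointwise

universe v

section Wdep
variable (A : Type*) [CommRing A] [IsLocalRing A]
variable (M : Type v) [AddCommGroup M] [Module A M]

/-- `M` admits a weakly regular sequence of length `k` inside the maximal ideal. -/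
def wdep (k : ℕ) : Prop :=
  ∃ rs : List A, rs.length = k ∧ (∀ r ∈ rs, r ∈ maximalIdeal A) ∧ IsWeaklyRegular M rs

variable {A M}

theorem wdep_zero : wdep A M 0 := ⟨[], rfl, by simp, IsWeaklyRegular.nil A M⟩

theorem isWeaklyRegular_of_subsingleton' (rs : List A) :
    ∀ {M' : Type v} [AddCommGroup M'] [Module A M'] [Subsingleton M'],
      IsWeaklyRegular M' rs := by
  induction rs with
  | nil => intro M' _ _ _; exact IsWeaklyRegular.nil A M'
  | cons r rs ih =>
    intro M' _ _ _
    rw [isWeaklyRegular_cons_iff]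
    have : Subsingleton (QuotSMulTop r M') :=
      (Submodule.Quotient.mk_surjective _).subsingleton
    exact ⟨fun a b _ => Subsingleton.elim a b, ih⟩

theorem isWeaklyRegular_of_subsingleton [Subsingleton M] (rs : List A) :
    IsWeaklyRegular M rs := isWeaklyRegular_of_subsingleton' rs

theorem wdep_subsingleton [Subsingleton M] (k : ℕ) : wdep A M k :=
  ⟨List.replicate k 0, by simp, by simp [zero_mem], isWeaklyRegular_of_subsingleton _⟩

theorem wdep_congr {N : Type*} [AddCommGroup N] [Module A N] (e : M ≃ₗ[A] N) {k : ℕ}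
    (h : wdep A M k) : wdep A N k := by
  obtain ⟨rs, h1, h2, h3⟩ := h
  exact ⟨rs, h1, h2, (e.isWeaklyRegular_congr rs).mp h3⟩

theorem wdep_mono {k k' : ℕ} (hk : k' ≤ k) (h : wdep A M k) : wdep A M k' := by
  obtain ⟨rs, h1, h2, h3⟩ := h
  refine ⟨rs.take k', by rw [List.length_take, h1]; omega,
    fun r hr => h2 r (List.mem_of_mem_take hr), ?_⟩
  have := (isWeaklyRegular_append_iff M (rs.take k') (rs.drop k')).mp
    (by rwa [List.take_append_drop])
  exact this.1

theorem wdep_destruct {k : ℕ} (h : wdep A M (k+1)) :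
    ∃ x ∈ maximalIdeal A, IsSMulRegular M x ∧ wdep A (QuotSMulTop x M) k := by
  obtain ⟨rs, h1, h2, h3⟩ := h
  match rs, h1 with
  | x :: rest, h1 =>
    rw [isWeaklyRegular_cons_iff] at h3
    exact ⟨x, h2 x List.mem_cons_self, h3.1,
      ⟨rest, by simpa using h1, fun r hr => h2 r (List.mem_cons_of_mem _ hr), h3.2⟩⟩

theorem wdep_cons {k : ℕ} {x : A} (hx : x ∈ maximalIdeal A) (h1 : IsSMulRegular M x)
    (h2 : wdep A (QuotSMulTop x M) k) : wdep A M (k+1) := by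
  obtain ⟨rs, hl, hm, hr⟩ := h2
  exact ⟨x :: rs, by simp [hl], by
    intro r hr'
    rcases List.mem_cons.mp hr' with rfl | h
    · exact hx
    · exact hm r h, (isWeaklyRegular_cons_iff M x rs).mpr ⟨h1, hr⟩⟩

theorem mem_smulTop_iff {x : A} {U : M} :
    U ∈ x • (⊤ : Submodule A M) ↔ ∃ c : M, x • c = U := by
  rw [← SetLike.mem_coe, Submodule.coe_pointwise_smul]
  constructor
  · rintro ⟨c, -, rfl⟩; exact ⟨c, rfl⟩
  · rintro ⟨c, rfl⟩; exact ⟨c, trivial, rfl⟩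

/-- The key elementary chase: if `x` is regular on `M` and `x₁, x₂` is a weakly regular
pair on `M`, then any element sent into `xM` by both `x₁` and `x₂` lies in `xM`. -/
theorem chase1 {x x₁ x₂ : A} (hx : IsSMulRegular M x) (h1 : IsSMulRegular M x₁)
    (h2 : IsSMulRegular (QuotSMulTop x₁ M) x₂) {U : M}
    (hU1 : x₁ • U ∈ x • (⊤ : Submodule A M)) (hU2 : x₂ • U ∈ x • (⊤ : Submodule A M)) :
    U ∈ x • (⊤ : Submodule A M) := by
  obtain ⟨a, ha⟩ := mem_smulTop_iff.mp hU1
  obtain ⟨b, hb⟩ := mem_smulTop_iff.mp hU2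
  have hab : x₂ • a = x₁ • b := by
    apply hx
    calc x • x₂ • a = x₂ • x • a := smul_comm _ _ _
    _ = x₂ • x₁ • U := by rw [ha]
    _ = x₁ • x₂ • U := smul_comm _ _ _
    _ = x₁ • x • b := by rw [hb]
    _ = x • x₁ • b := smul_comm _ _ _
  have hmk : (Submodule.Quotient.mk a : QuotSMulTop x₁ M) = 0 := by
    have h0 : x₂ • (Submodule.Quotient.mk a : QuotSMulTop x₁ M) = x₂ • 0 := by
      rw [smul_zero, ← Submodule.Quotient.mk_smul, hab, Submodule.Quotient.mk_eq_zero]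
      exact Submodule.smul_mem_pointwise_smul _ _ _ trivial
    exact h2 h0
  rw [Submodule.Quotient.mk_eq_zero] at hmk
  obtain ⟨c, hc⟩ := mem_smulTop_iff.mp hmk
  refine mem_smulTop_iff.mpr ⟨c, h1 ?_⟩
  calc x₁ • x • c = x • x₁ • c := smul_comm _ _ _
  _ = x • a := by rw [hc]
  _ = x₁ • U := ha

end Wdep
section Exchange
variable {A : Type*} [CommRing A] [IsLocalRing A] [IsNoetherianRing A]

/-- No socle in `M/xM` when `x` is regular and `M` has a weakly regular pair. -/
theorem exists_reg_quot {M : Type v} [AddCommGroup M] [Module A M] [Module.Finite A M]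
    {x x₁ x₂ : A} (hx₁m : x₁ ∈ maximalIdeal A) (hx₂m : x₂ ∈ maximalIdeal A)
    (hx : IsSMulRegular M x) (h1 : IsSMulRegular M x₁)
    (h2 : IsSMulRegular (QuotSMulTop x₁ M) x₂) :
    ∃ y ∈ maximalIdeal A, IsSMulRegular (QuotSMulTop x M) y := by
  apply exists_reg_of_no_socle
  intro u hu
  by_contra hcon
  push_neg at hcon
  obtain ⟨U, rfl⟩ := Submodule.Quotient.mk_surjective _ u
  have hU : ∀ a ∈ maximalIdeal A, a • U ∈ x • (⊤ : Submodule A M) := by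
    intro a ha
    have := hcon a ha
    rwa [← Submodule.Quotient.mk_smul, Submodule.Quotient.mk_eq_zero] at this
  exact hu (by
    rw [Submodule.Quotient.mk_eq_zero]
    exact chase1 hx h1 h2 (hU x₁ hx₁m) (hU x₂ hx₂m))

/-- Exchange lemma: quotienting by any regular element in the maximal ideal
drops `wdep` by at most one. -/
theorem wdep_quotSMulTop : ∀ (k : ℕ) {M : Type v} [AddCommGroup M] [Module A M]
    [Module.Finite A M] {x : A}, x ∈ maximalIdeal A → IsSMulRegular M x →
    wdep A M (k+1) → wdep A (QuotSMulTop x M) k := by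
  intro k
  induction k with
  | zero => intro M _ _ _ x _ _ _; exact wdep_zero
  | succ k IH =>
    intro M _ _ _ x hxm hx h
    obtain ⟨x₁, hx₁m, h1, hw1⟩ := wdep_destruct h
    obtain ⟨x₂, hx₂m, h2, hw2⟩ := wdep_destruct hw1
    have hNoeth : IsNoetherian A M := isNoetherian_of_isNoetherianRing_of_finite A M
    -- find y regular on both M/xM and M/x₁M
    obtain ⟨y, hym, hyQx, hyQx₁⟩ := avoid₂ (exists_reg_quot hx₁m hx₂m hx h1 h2)
      ⟨x₂, hx₂m, h2⟩
    -- wdep (M/x₁M) (k+1) quotiented by y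
    obtain ⟨zs, hzl, hzm, hzr⟩ := IH hym hyQx₁ hw1
    -- x₁ :: y :: zs is weakly regular on M; permute
    have hL1 : RingTheory.Sequence.IsWeaklyRegular M (x₁ :: y :: zs) := by
      rw [RingTheory.Sequence.isWeaklyRegular_cons_iff]
      exact ⟨h1, by rw [RingTheory.Sequence.isWeaklyRegular_cons_iff]; exact ⟨hyQx₁, hzr⟩⟩
    have hmem1 : ∀ r ∈ (x₁ :: y :: zs), r ∈ maximalIdeal A := by
      intro r hr
      rcases List.mem_cons.mp hr with rfl | hr
      · exact hx₁m
      rcases List.mem_cons.mp hr with rfl | hr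
      · exact hym
      · exact hzm r hr
    have hL2 : RingTheory.Sequence.IsWeaklyRegular M (y :: x₁ :: zs) :=
      IsLocalRing.isWeaklyRegular_of_perm_of_subset_maximalIdeal hL1
        (List.Perm.swap y x₁ zs) hmem1
    rw [RingTheory.Sequence.isWeaklyRegular_cons_iff] at hL2
    obtain ⟨hyM, hL2'⟩ := hL2
    rw [RingTheory.Sequence.isWeaklyRegular_cons_iff] at hL2'
    obtain ⟨hx₁Qy, hzsQ⟩ := hL2'
    -- x is regular on M/yM : permute the pair (x, y)
    have hPair : RingTheory.Sequence.IsWeaklyRegular M [x, y] := by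
      rw [RingTheory.Sequence.isWeaklyRegular_cons_iff]
      refine ⟨hx, ?_⟩
      rw [RingTheory.Sequence.isWeaklyRegular_cons_iff]
      exact ⟨hyQx, RingTheory.Sequence.IsWeaklyRegular.nil A _⟩
    have hPair' : RingTheory.Sequence.IsWeaklyRegular M [y, x] :=
      IsLocalRing.isWeaklyRegular_of_perm_of_subset_maximalIdeal hPair
        (List.Perm.swap y x []) (by
          intro r hr
          rcases List.mem_cons.mp hr with rfl | hr
          · exact hxm
          rcases List.mem_cons.mp hr with rfl | hr
          · exact hym
          · simp at hr)
    rw [RingTheory.Sequence.isWeaklyRegular_cons_iff] at hPair'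
    obtain ⟨-, hPair''⟩ := hPair'
    rw [RingTheory.Sequence.isWeaklyRegular_cons_iff] at hPair''
    obtain ⟨hxQy, -⟩ := hPair''
    -- wdep (M/yM) (k+1) via (x₁ :: zs); quotient by x using IH
    have hwQy : wdep A (QuotSMulTop y M) (k+1) := by
      refine ⟨x₁ :: zs, by simp [hzl], ?_, ?_⟩
      · intro r hr
        rcases List.mem_cons.mp hr with rfl | hr
        · exact hx₁m
        · exact hzm r hr
      · rw [RingTheory.Sequence.isWeaklyRegular_cons_iff]
        exact ⟨hx₁Qy, hzsQ⟩
    obtain ⟨ws, hwl, hwm, hwr⟩ := IH hxm hxQy hwQy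
    -- y :: x :: ws weakly regular on M, permute to x :: y :: ws
    have hL3 : RingTheory.Sequence.IsWeaklyRegular M (y :: x :: ws) := by
      rw [RingTheory.Sequence.isWeaklyRegular_cons_iff]
      exact ⟨hyM, by
        rw [RingTheory.Sequence.isWeaklyRegular_cons_iff]; exact ⟨hxQy, hwr⟩⟩
    have hL4 : RingTheory.Sequence.IsWeaklyRegular M (x :: y :: ws) :=
      IsLocalRing.isWeaklyRegular_of_perm_of_subset_maximalIdeal hL3
        (List.Perm.swap x y ws) (by
          intro r hr
          rcases List.mem_cons.mp hr with rfl | hr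
          · exact hym
          rcases List.mem_cons.mp hr with rfl | hr
          · exact hxm
          · exact hwm r hr)
    rw [RingTheory.Sequence.isWeaklyRegular_cons_iff] at hL4
    refine ⟨y :: ws, by simp [hwl], ?_, hL4.2⟩
    intro r hr
    rcases List.mem_cons.mp hr with rfl | hr
    · exact hym
    · exact hwm r hr

end Exchange
section SES
variable {A : Type*} [CommRing A] [IsLocalRing A] [IsNoetherianRing A]

theorem fin_submodule {M : Type v} [AddCommGroup M] [Module A M] [Module.Finite A M]
    (N : Submodule A M) : Module.Finite A N := by
  have : IsNoetherian A M := isNoetherian_of_isNoetherianRing_of_finite A M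
  exact Module.Finite.iff_fg.mpr (IsNoetherian.noetherian N)

theorem isSMulRegular_fst {M : Type v} {N : Type w} [AddCommGroup M] [Module A M]
    [AddCommGroup N] [Module A N] {x : A} (h : IsSMulRegular (M × N) x) :
    IsSMulRegular M x := fun a b hab => by
  have := h (show x • ((a, 0) : M × N) = x • ((b, 0) : M × N) by simp [Prod.ext_iff, hab])
  simpa [Prod.ext_iff] using this

theorem isSMulRegular_snd {M : Type v} {N : Type w} [AddCommGroup M] [Module A M]
    [AddCommGroup N] [Module A N] {x : A} (h : IsSMulRegular (M × N) x) :
    IsSMulRegular N x := fun a b hab => by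
  have := h (show x • ((0, a) : M × N) = x • ((0, b) : M × N) by simp [Prod.ext_iff, hab])
  simpa [Prod.ext_iff] using this

theorem chase2 {M : Type v} [AddCommGroup M] [Module A M] (K : Submodule A M) {x y : A}
    (hxM : IsSMulRegular M x) (hyK : IsSMulRegular (QuotSMulTop x (↥K)) y) {U : M}
    (h1 : x • U ∈ K) (h2 : y • U ∈ K) : U ∈ K := by
  set κ : K := ⟨x • U, h1⟩ with hκ
  set lam : K := ⟨y • U, h2⟩ with hlam
  have hyx : y • κ = x • lam := by
    ext
    simp [hκ, hlam, smul_comm y x U]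
  have hmk : (Submodule.Quotient.mk κ : QuotSMulTop x (↥K)) = 0 := by
    have h0 : y • (Submodule.Quotient.mk κ : QuotSMulTop x (↥K)) = y • 0 := by
      rw [smul_zero, ← Submodule.Quotient.mk_smul, hyx, Submodule.Quotient.mk_eq_zero]
      exact Submodule.smul_mem_pointwise_smul _ _ _ trivial
    exact hyK h0
  rw [Submodule.Quotient.mk_eq_zero] at hmk
  obtain ⟨κ', hκ'⟩ := mem_smulTop_iff.mp hmk
  have : x • U = x • (κ' : M) := by
    have := congrArg (Subtype.val) hκ'
    simpa [hκ] using this.symm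
  have hU : U = (κ' : M) := hxM this
  rw [hU]; exact κ'.2

theorem map_smul_top {M : Type v} {N : Type w} [AddCommGroup M] [Module A M]
    [AddCommGroup N] [Module A N] (f : M →ₗ[A] N) (hf : Function.Surjective f) (x : A) :
    (x • (⊤ : Submodule A M)).map f = x • (⊤ : Submodule A N) := by
  ext z
  rw [mem_smulTop_iff (A := A)]
  constructor
  · rintro ⟨w, hw, rfl⟩
    obtain ⟨c, hc⟩ := mem_smulTop_iff.mp hw
    exact ⟨f c, by rw [← hc, map_smul]⟩
  · rintro ⟨c, rfl⟩
    obtain ⟨c', rfl⟩ := hf c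
    exact ⟨x • c', mem_smulTop_iff.mpr ⟨c', rfl⟩, by rw [map_smul]⟩

/-- The depth lemma for a quotient: if `K ⊆ M` with `wdep K (k+1)` and `wdep M k`,
then `wdep (M ⧸ K) k`. -/
theorem wdep_quotient : ∀ (k : ℕ) {M : Type v} [AddCommGroup M] [Module A M]
    [Module.Finite A M] (K : Submodule A M),
    wdep A (↥K) (k+1) → wdep A M k → wdep A (M ⧸ K) k := by
  intro k
  induction k with
  | zero => intro M _ _ _ K _ _; exact wdep_zero
  | succ k IH =>
    intro M _ _ _ K hK hM
    have finK : Module.Finite A (↥K) := fin_submodule K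
    -- a common regular element on K and M
    obtain ⟨a₁, ha₁m, ha₁, _⟩ := wdep_destruct hK
    obtain ⟨b₁, hb₁m, hb₁, _⟩ := wdep_destruct hM
    obtain ⟨x₀, hx₀m, hx₀K, hx₀M⟩ := avoid₂ ⟨a₁, ha₁m, ha₁⟩ ⟨b₁, hb₁m, hb₁⟩
    -- a regular element on K/x₀K
    obtain ⟨y₀, hy₀m, hy₀, _⟩ := wdep_destruct
      (wdep_quotSMulTop (k+1) hx₀m hx₀K hK)
    -- M/K has no socle, hence has a regular element
    have hreg_quot : ∃ z ∈ maximalIdeal A, IsSMulRegular (M ⧸ K) z := by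
      apply exists_reg_of_no_socle
      intro u hu
      by_contra hcon
      push_neg at hcon
      obtain ⟨U, rfl⟩ := Submodule.Quotient.mk_surjective _ u
      have hmem : ∀ a ∈ maximalIdeal A, a • U ∈ K := by
        intro a ha
        have := hcon a ha
        rwa [← Submodule.Quotient.mk_smul, Submodule.Quotient.mk_eq_zero] at this
      exact hu (by
        rw [Submodule.Quotient.mk_eq_zero]
        exact chase2 K hx₀M hy₀ (hmem x₀ hx₀m) (hmem y₀ hy₀m))
    -- a regular element on K, M and M/K simultaneously
    obtain ⟨x, hxm, hxKM, hxQ⟩ := avoid₂ (M := (↥K) × M)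
      ⟨x₀, hx₀m, isSMulRegular_prod hx₀K hx₀M⟩ hreg_quot
    have hxK : IsSMulRegular (↥K) x := isSMulRegular_fst hxKM
    have hxM : IsSMulRegular M x := isSMulRegular_snd hxKM
    -- quotient everything by x
    have hQK : wdep A (QuotSMulTop x (↥K)) (k+1) := wdep_quotSMulTop (k+1) hxm hxK hK
    have hQM : wdep A (QuotSMulTop x M) k := wdep_quotSMulTop k hxm hxM hM
    set Kt : Submodule A (QuotSMulTop x M) := K.map (x • (⊤ : Submodule A M)).mkQ with hKt
    -- (i) : QuotSMulTop x K ≃ₗ Kt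
    set φ : (↥K) →ₗ[A] QuotSMulTop x M :=
      ((x • (⊤ : Submodule A M)).mkQ).comp K.subtype with hφ
    have hker : LinearMap.ker φ = x • (⊤ : Submodule A (↥K)) := by
      ext κ
      rw [LinearMap.mem_ker, hφ, LinearMap.comp_apply, Submodule.subtype_apply,
        Submodule.mkQ_apply, Submodule.Quotient.mk_eq_zero, mem_smulTop_iff,
        mem_smulTop_iff]
      constructor
      · rintro ⟨c, hc⟩
        have hcK : c ∈ K := by
          have h0 : x • (Submodule.Quotient.mk c : M ⧸ K) = x • 0 := by
            rw [smul_zero, ← Submodule.Quotient.mk_smul, hc, Submodule.Quotient.mk_eq_zero]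
            exact κ.2
          have := hxQ h0
          rwa [Submodule.Quotient.mk_eq_zero] at this
        exact ⟨⟨c, hcK⟩, by ext; simpa using hc⟩
      · rintro ⟨c, rfl⟩
        exact ⟨(c : M), rfl⟩
    have hrange : LinearMap.range φ = Kt := by
      rw [hφ, LinearMap.range_comp, Submodule.range_subtype, hKt]
    have e1 : QuotSMulTop x (↥K) ≃ₗ[A] ↥Kt :=
      Submodule.quotEquivOfEq _ _ hker.symm ≪≫ₗ φ.quotKerEquivRange ≪≫ₗ
        LinearEquiv.ofEq _ _ hrange
    -- (ii) : (QuotSMulTop x M ⧸ Kt) ≃ₗ QuotSMulTop x (M ⧸ K)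
    have hmapbot : ∀ (N : Submodule A M), N.map N.mkQ = ⊥ := by
      intro N
      rw [eq_bot_iff]
      rintro z ⟨w, hw, rfl⟩
      simpa [Submodule.mem_bot, Submodule.mkQ_apply, Submodule.Quotient.mk_eq_zero] using hw
    have hmapbotx : (x • (⊤ : Submodule A M)).map (x • (⊤ : Submodule A M)).mkQ = ⊥ :=
      hmapbot _
    have hmapbotK : K.map K.mkQ = ⊥ := hmapbot _
    have hsup1 : (K ⊔ x • (⊤ : Submodule A M)).map (x • (⊤ : Submodule A M)).mkQ = Kt := by
      rw [Submodule.map_sup, hmapbotx, sup_bot_eq, hKt]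
    have hsup2 : (K ⊔ x • (⊤ : Submodule A M)).map K.mkQ
        = x • (⊤ : Submodule A (M ⧸ K)) := by
      rw [Submodule.map_sup, hmapbotK, bot_sup_eq,
        map_smul_top K.mkQ (Submodule.mkQ_surjective K) x]
    have e2 : ((QuotSMulTop x M) ⧸ Kt) ≃ₗ[A] QuotSMulTop x (M ⧸ K) :=
      Submodule.quotEquivOfEq _ _ hsup1.symm ≪≫ₗ
        Submodule.quotientQuotientEquivQuotient _ _ le_sup_right ≪≫ₗ
        (Submodule.quotientQuotientEquivQuotient K (K ⊔ x • (⊤ : Submodule A M))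
          le_sup_left).symm ≪≫ₗ Submodule.quotEquivOfEq _ _ hsup2
    -- apply induction hypothesis
    have hIH : wdep A ((QuotSMulTop x M) ⧸ Kt) k :=
      IH Kt (wdep_congr e1 hQK) hQM
    exact wdep_cons hxm hxQ (wdep_congr e2 hIH)

end SES
section Homological
open CategoryTheory Limits HomologicalComplex
variable {A : Type} [CommRing A] [IsLocalRing A] [IsNoetherianRing A]

theorem subsingleton_of_isZero {X : ModuleCat A} (h : IsZero X) : Subsingleton X := by
  have h0 : (𝟙 X : X ⟶ X) = 0 := h.eq_of_src _ _
  refine ⟨fun a b => ?_⟩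
  have ha := congrArg (fun f : X ⟶ X => f a) h0
  have hb := congrArg (fun f : X ⟶ X => f b) h0
  simp only [ModuleCat.id_apply] at ha hb
  calc a = (0 : X ⟶ X) a := ha
  _ = (0 : X ⟶ X) b := by simp
  _ = b := hb.symm

/-- The main chase: a short complex of modules whose homology has finite length,
whose middle has `wdep ≥ 1` and whose boundary module has `wdep ≥ 2`, is exact. -/
theorem sc_exact_of_wdep (S : ShortComplex (ModuleCat A)) [Module.Finite A S.X₂]
    (hB : wdep A ↥(LinearMap.range S.f.hom) 2) (hM : wdep A S.X₂ 1)
    (hfl : IsFiniteLength A S.moduleCatLeftHomologyData.H) : S.Exact := by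
  rw [ShortComplex.moduleCat_exact_iff_range_eq_ker]
  by_contra hne
  have hBZ : LinearMap.range S.f.hom ≤ LinearMap.ker S.g.hom := fun z hz => by
    obtain ⟨w, rfl⟩ := hz
    exact LinearMap.mem_ker.mpr (S.moduleCat_zero_apply w)
  -- membership criterion in the homology quotient
  have hQmem : ∀ (z : ↥(LinearMap.ker S.g.hom)),
      (Submodule.Quotient.mk z : S.moduleCatLeftHomologyData.H) = 0 ↔ (z : ↥S.X₂) ∈ LinearMap.range S.f.hom := by
    intro z
    rw [Submodule.Quotient.mk_eq_zero]
    constructor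
    · rintro ⟨a, ha⟩
      exact ⟨a, congrArg Subtype.val ha⟩
    · rintro ⟨a, ha⟩
      exact ⟨a, Subtype.ext ha⟩
  -- the homology is a nontrivial finite length module, take a socle element
  obtain ⟨U, hUZ, hUB⟩ := SetLike.exists_of_lt (lt_of_le_of_ne hBZ hne)
  have : Nontrivial S.moduleCatLeftHomologyData.H := by
    refine ⟨Submodule.Quotient.mk ⟨U, hUZ⟩, 0, fun h => hUB ?_⟩
    exact (hQmem ⟨U, hUZ⟩).mp h
  obtain ⟨hNoe, hArt⟩ := isFiniteLength_iff_isNoetherian_isArtinian.mp hfl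
  obtain ⟨q, hq0, hqsoc⟩ := exists_socle (A := A) (M := S.moduleCatLeftHomologyData.H)
  obtain ⟨ζ, rfl⟩ := Submodule.Quotient.mk_surjective _ q
  have hζB : (ζ : ↥S.X₂) ∉ LinearMap.range S.f.hom := fun h => hq0 ((hQmem ζ).mpr h)
  have hsoc : ∀ a ∈ maximalIdeal A, a • (ζ : ↥S.X₂) ∈ LinearMap.range S.f.hom := by
    intro a ha
    have := hqsoc a ha
    exact (hQmem (a • ζ)).mp (by rw [Submodule.Quotient.mk_smul]; exact this)
  -- a common regular element on X₂ and on the boundary module B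
  have finB : Module.Finite A ↥(LinearMap.range S.f.hom) := fin_submodule _
  obtain ⟨a₁, ha₁m, ha₁, -⟩ := wdep_destruct hB
  obtain ⟨b₁, hb₁m, hb₁, -⟩ := wdep_destruct hM
  obtain ⟨x, hxm, hxB, hxM⟩ := avoid₂ ⟨a₁, ha₁m, ha₁⟩ ⟨b₁, hb₁m, hb₁⟩
  obtain ⟨y, hym, hy, -⟩ := wdep_destruct (wdep_quotSMulTop 1 hxm hxB hB)
  exact hζB (chase2 (LinearMap.range S.f.hom) hxM hy (hsoc x hxm) (hsoc y hym))

variable (C : ChainComplex (ModuleCat A) ℕ)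

theorem exactAt_of_wdep (j k' : ℕ) (hk : (ComplexShape.down ℕ).next j = k')
    [Module.Finite A (C.X j)]
    (hB : wdep A ↥(LinearMap.range (C.d (j+1) j).hom) 2) (hM : wdep A ↥(C.X j) 1)
    (hfl : IsFiniteLength A (C.homology j)) : C.ExactAt j := by
  rw [C.exactAt_iff' (j+1) j k' (ChainComplex.prev ℕ j) hk]
  have e : C.homology j ≅ (C.sc' (j+1) j k').homology :=
    C.homologyIsoSc' (j+1) j k' (ChainComplex.prev ℕ j) hk
  have e2 : (C.sc' (j+1) j k').homology ≅ (C.sc' (j+1) j k').moduleCatLeftHomologyData.H :=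
    (C.sc' (j+1) j k').moduleCatHomologyIso
  have : Module.Finite A ↥((C.sc' (j+1) j k').X₂) := by
    show Module.Finite A (C.X j); infer_instance
  exact sc_exact_of_wdep (C.sc' (j+1) j k') hB hM
    ((e.trans e2).toLinearEquiv.isFiniteLength hfl)

end Homological

theorem wdep_of_le_moduleDepth {A : Type} [CommRing A] [IsLocalRing A] {M : Type}
    [AddCommGroup M] [Module A M] {r : ℕ} (h : r ≤ moduleDepth A M) : wdep A M r := by
  rcases Nat.eq_zero_or_pos r with rfl | hr
  · exact wdep_zero
  set S : Set ℕ := {n | ∃ rs : List A, rs.length = n ∧ (∀ x ∈ rs, x ∈ maximalIdeal A) ∧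
    RingTheory.Sequence.IsRegular M rs} with hS
  by_cases hex : ∃ k ∈ S, r ≤ k
  · obtain ⟨k, ⟨rs, hl, hm, hreg⟩, hrk⟩ := hex
    exact wdep_mono hrk ⟨rs, hl, hm, hreg.toIsWeaklyRegular⟩
  · exfalso
    push_neg at hex
    have hbdd : BddAbove S := ⟨r, fun k hk => (hex k hk).le⟩
    by_cases hne : S.Nonempty
    · have hmem := Nat.sSup_mem hne hbdd
      have := hex _ hmem
      have hsup : moduleDepth A M = sSup S := rfl
      omega
    · rw [Set.not_nonempty_iff_eq_empty] at hne
      have hsup : moduleDepth A M = sSup S := rfl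
      rw [hne, csSup_empty, Nat.bot_eq_zero] at hsup
      omega


open CategoryTheory Limits HomologicalComplex in
/-- Acyclicity Lemma of Peskine–Szpiro. Let
`0 → M_n → ⋯ → M_0` be a complex of finitely generated modules over a Noetherian local
ring whose homology has finite length.  If each `M_i` (for `i ≤ n`) has depth at least
`r`, then `H_i` vanishes for `n ≥ i ≥ n - r + 1`. -/
theorem stmt5 (A : Type) [CommRing A] [IsNoetherianRing A] [IsLocalRing A]
    (n r : ℕ) (C : ChainComplex (ModuleCat A) ℕ)
    (hbdd : ∀ i > n, Limits.IsZero (C.X i))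
    (hfg : ∀ i, Module.Finite A (C.X i))
    (hdepth : ∀ i ≤ n, r ≤ moduleDepth A (C.X i))
    (hfl : ∀ i, IsFiniteLength A (C.homology i)) :
    ∀ i : ℕ, (n : ℤ) - r + 1 ≤ i → i ≤ n → Limits.IsZero (C.homology i) := by
  have key : ∀ k : ℕ, k ≤ n → k < r → C.ExactAt (n - k) ∧
      wdep A ↥(LinearMap.range (C.d (n - k + 1) (n - k)).hom) (r - k + 1) := by
    intro k
    induction k with
    | zero =>
      intro _ hr
      haveI := hfg n
      have hsub : Subsingleton ↥(C.X (n+1)) := subsingleton_of_isZero (hbdd (n+1) (by omega))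
      have hbot : LinearMap.range (C.d (n+1) n).hom = ⊥ := by
        rw [eq_bot_iff]
        rintro z ⟨w, rfl⟩
        rw [Subsingleton.elim w 0, map_zero]
        exact Submodule.zero_mem ⊥
      have hsb : Subsingleton ↥(LinearMap.range (C.d (n+1) n).hom) := by
        rw [hbot]; infer_instance
      simp only [Nat.sub_zero]
      refine ⟨?_, wdep_subsingleton _⟩
      exact exactAt_of_wdep C n _ rfl (wdep_subsingleton _)
        (wdep_mono (by omega) (wdep_of_le_moduleDepth (hdepth n le_rfl))) (hfl n)
    | succ k IH =>
      intro hkn hkr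
      obtain ⟨hexact_prev, hw_prev⟩ := IH (by omega) (by omega)
      set i := n - (k+1) with hidef
      have hi1 : n - k = i + 1 := by omega
      rw [hi1] at hexact_prev hw_prev
      haveI := hfg (i+1+1); haveI := hfg (i+1); haveI := hfg i
      have hex' : (C.sc' (i+1+1) (i+1) i).Exact := by
        rwa [C.exactAt_iff' (i+1+1) (i+1) i (ChainComplex.prev ℕ (i+1))
          (ChainComplex.next_nat_succ i)] at hexact_prev
      have hker : LinearMap.range (C.d (i+1+1) (i+1)).hom = LinearMap.ker (C.d (i+1) i).hom :=
        hex'.moduleCat_range_eq_ker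
      have hw_ker : wdep A ↥(LinearMap.ker (C.d (i+1) i).hom) ((r - (k+1) + 1) + 1) := by
        have harith : r - (k+1) + 1 + 1 = r - k + 1 := by omega
        rw [harith, ← hker]
        exact hw_prev
      have hw_X : wdep A ↥(C.X (i+1)) (r - (k+1) + 1) :=
        wdep_mono (by omega) (wdep_of_le_moduleDepth (hdepth (i+1) (by omega)))
      have hw_cur : wdep A ↥(LinearMap.range (C.d (i+1) i).hom) (r - (k+1) + 1) :=
        wdep_congr (LinearMap.quotKerEquivRange (C.d (i+1) i).hom)
          (wdep_quotient _ _ hw_ker hw_X)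
      refine ⟨?_, hw_cur⟩
      exact exactAt_of_wdep C i _ rfl (wdep_mono (by omega) hw_cur)
        (wdep_mono (by omega) (wdep_of_le_moduleDepth (hdepth i (by omega)))) (hfl i)
  intro i hi1 hi2
  rw [← C.exactAt_iff_isZero_homology]
  have hklt : n - i < r := by omega
  have h := (key (n - i) (by omega) hklt).1
  rwa [show n - (n - i) = i by omega] at h
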